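/- Let d₁,…,d_{g-1} be pairwise coprime positive integers (coprime polarisation type), let v¹,…,vⁿ ∈ ℤ^{2g}, and let A be a unimodular n×n integer matrix with uⁱ := Σ_l a_{il} v^l. Then for every 1 ≤ k ≤ g−1, gcd(D_k(u¹),…,D_k(uⁿ)) = gcd(D_k(v¹),…,D_k(vⁿ)). -/

import Mathlib

/-- The divisors `D_i(v)` of a vector `v ∈ ℤ^{2g}` (entries indexed `1,…,2g`),
for the polarisation type `(1, d₁, d₁d₂, …, d₁⋯d_{g-1})`. -/
def paraD (g : ℕ) (d : ℕ → ℕ) (v : ℕ → ℤ) : ℕ → ℕ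
  | i => Nat.gcd (d i) ((Finset.Icc 1 i).attach.gcd fun j =>
      Int.gcd (v j.1) (v (g + j.1)) / ∏ n ∈ (Finset.Ico j.1 i).attach, paraD g d v n.1)
  termination_by i => i
  decreasing_by
    exact (Finset.mem_Ico.mp n.2).2

lemma gcd_attach' (s : Finset ℕ) (f : ℕ → ℕ) : s.attach.gcd (fun x => f x.1) = s.gcd f :=
  Nat.dvd_antisymm
    (Finset.dvd_gcd fun a ha => Finset.gcd_dvd (Finset.mem_attach s ⟨a, ha⟩))
    (Finset.dvd_gcd fun a _ => Finset.gcd_dvd a.2)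

lemma paraD_eq (g : ℕ) (d : ℕ → ℕ) (v : ℕ → ℤ) (i : ℕ) :
    paraD g d v i = Nat.gcd (d i) ((Finset.Icc 1 i).gcd fun j =>
      Int.gcd (v j) (v (g + j)) / ∏ n ∈ Finset.Ico j i, paraD g d v n) := by
  rw [paraD]
  congr 1
  rw [← gcd_attach' (Finset.Icc 1 i)
    (fun j => Int.gcd (v j) (v (g + j)) / ∏ n ∈ Finset.Ico j i, paraD g d v n)]
  apply Finset.gcd_congr rfl
  intro a _
  rw [Finset.prod_attach]

lemma paraD_dvd_d (g : ℕ) (d : ℕ → ℕ) (v : ℕ → ℤ) (i : ℕ) : paraD g d v i ∣ d i := by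
  rw [paraD_eq]; exact Nat.gcd_dvd_left _ _

lemma prod_paraD_dvd (g : ℕ) (d : ℕ → ℕ) (v : ℕ → ℤ) (j r : ℕ) (hj : 1 ≤ j) :
    (∏ m ∈ Finset.Ico j r, paraD g d v m) ∣ Int.gcd (v j) (v (g + j)) := by
  induction r with
  | zero => simp
  | succ r ih =>
    rcases le_or_gt j r with h | h
    · rw [Finset.prod_Ico_succ_top h]
      have h1 : paraD g d v r ∣
          Int.gcd (v j) (v (g + j)) / ∏ m ∈ Finset.Ico j r, paraD g d v m := by
        rw [paraD_eq]
        exact (Nat.gcd_dvd_right _ _).trans (Finset.gcd_dvd (Finset.mem_Icc.mpr ⟨hj, h⟩))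
      obtain ⟨c, hc⟩ := h1
      refine ⟨c, ?_⟩
      rw [mul_assoc, ← hc, Nat.mul_div_cancel' ih]
    · rw [Finset.Ico_eq_empty (by omega)]; simp

lemma paraD_eq_of_coprime (g : ℕ) (d : ℕ → ℕ)
    (hcop : ∀ i j, 1 ≤ i → i ≤ g - 1 → 1 ≤ j → j ≤ g - 1 → i ≠ j →
      Nat.gcd (d i) (d j) = 1)
    (v : ℕ → ℤ) (k : ℕ) (hk1 : 1 ≤ k) (hk2 : k ≤ g - 1) :
    paraD g d v k = Nat.gcd (d k) ((Finset.Icc 1 k).gcd fun j =>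
      Int.gcd (v j) (v (g + j))) := by
  have hcopP : ∀ j, 1 ≤ j → Nat.Coprime (d k) (∏ m ∈ Finset.Ico j k, paraD g d v m) := by
    intro j hj
    apply Nat.Coprime.prod_right
    intro m hm
    obtain ⟨hm1, hm2⟩ := Finset.mem_Ico.mp hm
    exact Nat.Coprime.coprime_dvd_right (paraD_dvd_d g d v m)
      (hcop k m hk1 hk2 (by omega) (by omega) (by omega))
  apply Nat.dvd_antisymm
  · refine Nat.dvd_gcd (paraD_dvd_d g d v k) (Finset.dvd_gcd fun j hj => ?_)
    obtain ⟨hj1, hj2⟩ := Finset.mem_Icc.mp hj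
    have h1 : paraD g d v k ∣
        Int.gcd (v j) (v (g + j)) / ∏ m ∈ Finset.Ico j k, paraD g d v m := by
      rw [paraD_eq]
      exact (Nat.gcd_dvd_right _ _).trans (Finset.gcd_dvd hj)
    exact h1.trans ⟨_, (Nat.div_mul_cancel (prod_paraD_dvd g d v j k hj1)).symm⟩
  · rw [paraD_eq]
    refine Nat.dvd_gcd (Nat.gcd_dvd_left _ _) (Finset.dvd_gcd fun j hj => ?_)
    obtain ⟨hj1, hj2⟩ := Finset.mem_Icc.mp hj
    set R := Nat.gcd (d k) ((Finset.Icc 1 k).gcd fun j => Int.gcd (v j) (v (g + j))) with hR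
    have hP := prod_paraD_dvd g d v j k hj1
    have hRG : R ∣ Int.gcd (v j) (v (g + j)) :=
      (Nat.gcd_dvd_right _ _).trans (Finset.gcd_dvd hj)
    have hcopR : Nat.Coprime R (∏ m ∈ Finset.Ico j k, paraD g d v m) :=
      Nat.Coprime.coprime_dvd_left (Nat.gcd_dvd_left _ _) (hcopP j hj1)
    have hGeq : Int.gcd (v j) (v (g + j)) =
        (Int.gcd (v j) (v (g + j)) / ∏ m ∈ Finset.Ico j k, paraD g d v m) *
        (∏ m ∈ Finset.Ico j k, paraD g d v m) := (Nat.div_mul_cancel hP).symm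
    exact hcopR.dvd_of_dvd_mul_right (hGeq ▸ hRG)

/-- For a coprime polarisation type, the gcd of the divisors `D_k` of a family
of vectors is invariant under a unimodular change of basis `uⁱ = Σ_l a_{il} v^l`. -/
theorem gcd_paraD_unimodular (g : ℕ) (hg : 1 ≤ g) (d : ℕ → ℕ) (hd : ∀ n, 0 < d n)
    (hcop : ∀ i j, 1 ≤ i → i ≤ g - 1 → 1 ≤ j → j ≤ g - 1 → i ≠ j →
      Nat.gcd (d i) (d j) = 1)
    (n : ℕ) (v : Fin n → (ℕ → ℤ)) (A : Matrix (Fin n) (Fin n) ℤ)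
    (hA : A.det = 1 ∨ A.det = -1)
    (u : Fin n → (ℕ → ℤ)) (hu : u = fun i j => ∑ l, A i l * v l j)
    (k : ℕ) (hk1 : 1 ≤ k) (hk2 : k ≤ g - 1) :
    Finset.univ.gcd (fun i => paraD g d (u i) k) =
      Finset.univ.gcd (fun i => paraD g d (v i) k) := by
  have key : ∀ (w w' : Fin n → ℕ → ℤ) (M : Matrix (Fin n) (Fin n) ℤ),
      (∀ i j, w' i j = ∑ l, M i l * w l j) →
      Finset.univ.gcd (fun i => paraD g d (w i) k) ∣
        Finset.univ.gcd (fun i => paraD g d (w' i) k) := by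
    intro w w' M hM
    refine Finset.dvd_gcd fun i _ => ?_
    rw [paraD_eq_of_coprime g d hcop (w' i) k hk1 hk2]
    set Gw := Finset.univ.gcd (fun i => paraD g d (w i) k) with hGw
    have hGwd : ∀ l : Fin n, Gw ∣ paraD g d (w l) k := fun l =>
      Finset.gcd_dvd (Finset.mem_univ l)
    refine Nat.dvd_gcd ?_ (Finset.dvd_gcd fun j hj => ?_)
    · have h0 := hGwd i
      rw [paraD_eq_of_coprime g d hcop (w i) k hk1 hk2] at h0
      exact h0.trans (Nat.gcd_dvd_left _ _)
    · have hent : ∀ (l : Fin n) (j' : ℕ), j' ∈ Finset.Icc 1 k → (Gw : ℤ) ∣ w l j' := by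
        intro l j' hj'
        have h0 := hGwd l
        rw [paraD_eq_of_coprime g d hcop (w l) k hk1 hk2] at h0
        have h1 : Gw ∣ Int.gcd (w l j') (w l (g + j')) :=
          (h0.trans (Nat.gcd_dvd_right _ _)).trans (Finset.gcd_dvd hj')
        exact (Int.natCast_dvd_natCast.mpr h1).trans (Int.gcd_dvd_left _ _)
      have hent' : ∀ (l : Fin n) (j' : ℕ), j' ∈ Finset.Icc 1 k → (Gw : ℤ) ∣ w l (g + j') := by
        intro l j' hj'
        have h0 := hGwd l
        rw [paraD_eq_of_coprime g d hcop (w l) k hk1 hk2] at h0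
        have h1 : Gw ∣ Int.gcd (w l j') (w l (g + j')) :=
          (h0.trans (Nat.gcd_dvd_right _ _)).trans (Finset.gcd_dvd hj')
        exact (Int.natCast_dvd_natCast.mpr h1).trans (Int.gcd_dvd_right _ _)
      have h2 : (Gw : ℤ) ∣ w' i j := by
        rw [hM i j]
        exact Finset.dvd_sum fun l _ => Dvd.dvd.mul_left (hent l j hj) _
      have h3 : (Gw : ℤ) ∣ w' i (g + j) := by
        rw [hM i (g + j)]
        exact Finset.dvd_sum fun l _ => Dvd.dvd.mul_left (hent' l j hj) _
      exact Int.natCast_dvd_natCast.mp (Int.dvd_coe_gcd h2 h3)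
  have hdet : IsUnit A.det := by rcases hA with h | h <;> simp [h]
  have hBA : A⁻¹ * A = 1 := Matrix.nonsing_inv_mul A hdet
  subst hu
  have hv : ∀ (l : Fin n) (j : ℕ), v l j = ∑ i, A⁻¹ l i * (∑ m, A i m * v m j) := by
    intro l j
    have h1 : ∀ i : Fin n, A⁻¹ l i * (∑ m, A i m * v m j) =
        ∑ m, A⁻¹ l i * A i m * v m j := by
      intro i; rw [Finset.mul_sum]; simp [mul_assoc]
    simp only [h1]
    rw [Finset.sum_comm]
    have h2 : ∀ m : Fin n, (∑ i, A⁻¹ l i * A i m * v m j) = (A⁻¹ * A) l m * v m j := by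
      intro m; rw [Matrix.mul_apply, Finset.sum_mul]
    simp only [h2, hBA, Matrix.one_apply]
    simp
  exact Nat.dvd_antisymm
    (key (fun i j => ∑ l, A i l * v l j) v A⁻¹ hv)
    (key v (fun i j => ∑ l, A i l * v l j) A (fun i j => rfl))
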